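/- arXiv:1704.02761 — 4 statements merged into one kernel-verified Lean document; each statement's English description precedes it below -/
import Mathlib

section
/- Let a_0, a_1, a_2, ... be i.i.d. complex random variables such that |a_0| is not almost surely constant and ℙ(a_0 = 0) = 0. Then there exist constants C_1 > 0, r > 0 and A > 0, depending only on the distribution of |a_0|, such that for every integer n ≥ 1 and every t with 0 < t < C_1, the smallest root modulus x_1^(n) of P_n(z) = ∑_{k=0}^n a_k z^k satisfies ℙ(x_1^(n) ≤ t) ≥ A · ℙ(|a_0| ≤ r t / 2). -/
open MeasureTheory ProbabilityTheory Polynomial Filter Metric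

/-- The random Kac polynomial `P_n(z) = ∑_{k=0}^n a_k z^k`. -/
noncomputable def kacPoly {Ω : Type*} (a : ℕ → Ω → ℂ) (n : ℕ) (ω : Ω) : Polynomial ℂ :=
  ∑ k ∈ Finset.range (n + 1), Polynomial.C (a k ω) * Polynomial.X ^ k

/-- The smallest modulus of a root of a complex polynomial. -/
noncomputable def minRootMod (p : Polynomial ℂ) : ℝ :=
  sInf ((fun z : ℂ => ‖z‖) '' {z : ℂ | z ∈ p.roots})

/-- The largest modulus of a root of a complex polynomial. -/
noncomputable def maxRootMod (p : Polynomial ℂ) : ℝ :=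
  sSup ((fun z : ℂ => ‖z‖) '' {z : ℂ | z ∈ p.roots})

lemma exists_root_of_sphere_lb (p : Polynomial ℂ) (t Δ : ℝ) (ht : 0 < t) (hΔ : 0 < Δ)
    (hsph : ∀ z : ℂ, ‖z‖ = t → Δ ≤ ‖p.eval z‖) (h0 : ‖p.eval 0‖ < Δ) :
    ∃ z : ℂ, ‖z‖ ≤ t ∧ p.eval z = 0 := by
  by_contra hne
  push_neg at hne
  have hnz : ∀ z ∈ closedBall (0 : ℂ) t, p.eval z ≠ 0 := by
    intro z hz
    exact hne z (by simpa using mem_closedBall_zero_iff.mp hz)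
  have hdc : DiffContOnCl ℂ (fun z => (p.eval z)⁻¹) (ball (0:ℂ) t) := by
    constructor
    · intro z hz
      exact ((p.differentiable.differentiableAt).inv
        (hnz z (ball_subset_closedBall hz))).differentiableWithinAt
    · rw [closure_ball (0:ℂ) ht.ne']
      exact (p.continuous_aeval.continuousOn).inv₀ hnz
  have hfr : ∀ z ∈ frontier (ball (0:ℂ) t), ‖(p.eval z)⁻¹‖ ≤ Δ⁻¹ := by
    intro z hz
    rw [frontier_ball (0:ℂ) ht.ne'] at hz
    have hzt : ‖z‖ = t := by simpa using mem_sphere_zero_iff_norm.mp hz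
    rw [norm_inv]
    exact inv_anti₀ hΔ (hsph z hzt)
  have h0m : (0:ℂ) ∈ closure (ball (0:ℂ) t) := by
    rw [closure_ball (0:ℂ) ht.ne']
    exact mem_closedBall_self ht.le
  have := Complex.norm_le_of_forall_mem_frontier_norm_le isBounded_ball hdc hfr h0m
  rw [norm_inv] at this
  have hp0 : p.eval 0 ≠ 0 := hnz 0 (mem_closedBall_self ht.le)
  have h1 : 0 < ‖p.eval 0‖ := norm_pos_iff.mpr hp0
  have h2 : Δ ≤ ‖p.eval 0‖ := by
    nlinarith [mul_le_mul_of_nonneg_left this (mul_pos h1 hΔ).le,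
      mul_inv_cancel₀ (ne_of_gt h1), mul_inv_cancel₀ (ne_of_gt hΔ)]
  linarith


lemma kacPoly_eval {Ω : Type*} (a : ℕ → Ω → ℂ) (n : ℕ) (ω : Ω) (z : ℂ) :
    (kacPoly a n ω).eval z = ∑ k ∈ Finset.range (n + 1), a k ω * z ^ k := by
  simp [kacPoly, Polynomial.eval_finset_sum]

lemma minRootMod_le_of_root {p : Polynomial ℂ} (hp : p ≠ 0) {z : ℂ} (hz : p.eval z = 0) :
    minRootMod p ≤ ‖z‖ := by
  apply csInf_le
  · exact ⟨0, fun x ⟨w, _, hw⟩ => hw ▸ norm_nonneg w⟩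
  · exact ⟨z, by simp [Polynomial.mem_roots, hp, Polynomial.IsRoot, hz], rfl⟩

lemma dominance_minRootMod {Ω : Type*} (a : ℕ → Ω → ℂ) (n : ℕ) (ω : Ω) (t r : ℝ)
    (ht : 0 < t) (hr : 0 < r) (j : ℕ) (hj : j ∈ Finset.Icc 1 n)
    (hdom : r + ∑ k ∈ (Finset.Icc 1 n).erase j, ‖a k ω‖ * t ^ (k - 1)
      < ‖a j ω‖ * t ^ (j - 1))
    (ha0 : ‖a 0 ω‖ ≤ r * t / 2) :
    minRootMod (kacPoly a n ω) ≤ t := by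
  have hj1 : 1 ≤ j := (Finset.mem_Icc.mp hj).1
  have hjn : j ≤ n := (Finset.mem_Icc.mp hj).2
  set Δ : ℝ := ‖a j ω‖ * t ^ j
    - ∑ k ∈ (Finset.range (n+1)).erase j, ‖a k ω‖ * t ^ k with hΔdef
  -- rewrite the erased range sum
  have hsetsplit : (Finset.range (n+1)).erase j = insert 0 ((Finset.Icc 1 n).erase j) := by
    ext k
    simp only [Finset.mem_erase, Finset.mem_range, Finset.mem_insert, Finset.mem_Icc]
    omega
  have h0notmem : (0:ℕ) ∉ (Finset.Icc 1 n).erase j := by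
    simp only [Finset.mem_erase, Finset.mem_Icc]
    omega
  have hsum0 : ∑ k ∈ (Finset.range (n+1)).erase j, ‖a k ω‖ * t ^ k
      = ‖a 0 ω‖ + ∑ k ∈ (Finset.Icc 1 n).erase j, ‖a k ω‖ * t ^ k := by
    rw [hsetsplit, Finset.sum_insert h0notmem]
    simp
  have hpow : ∀ k ∈ (Finset.Icc 1 n).erase j, ‖a k ω‖ * t ^ k
      = t * (‖a k ω‖ * t ^ (k-1)) := by
    intro k hk
    have hk1 : 1 ≤ k := (Finset.mem_Icc.mp (Finset.mem_of_mem_erase hk)).1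
    have : t ^ k = t * t ^ (k-1) := by
      rw [← pow_succ']
      congr 1
      omega
    rw [this]; ring
  have hsumt : ∑ k ∈ (Finset.Icc 1 n).erase j, ‖a k ω‖ * t ^ k
      = t * ∑ k ∈ (Finset.Icc 1 n).erase j, ‖a k ω‖ * t ^ (k-1) := by
    rw [Finset.mul_sum, Finset.sum_congr rfl hpow]
  have hpowj : ‖a j ω‖ * t ^ j = t * (‖a j ω‖ * t ^ (j-1)) := by
    have : t ^ j = t * t ^ (j-1) := by
      rw [← pow_succ']
      congr 1
      omega
    rw [this]; ring
  have hΔlb : r * t - ‖a 0 ω‖ ≤ Δ := by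
    rw [hΔdef, hsum0, hsumt, hpowj]
    have := mul_lt_mul_of_pos_left hdom ht
    nlinarith
  have hΔpos : 0 < Δ := by
    have h1 : ‖a 0 ω‖ ≤ r * t / 2 := ha0
    nlinarith
  have hΔgt : ‖a 0 ω‖ < Δ := by nlinarith
  -- sphere lower bound
  have hsph : ∀ z : ℂ, ‖z‖ = t → Δ ≤ ‖(kacPoly a n ω).eval z‖ := by
    intro z hz
    rw [kacPoly_eval]
    have hjr : j ∈ Finset.range (n+1) := Finset.mem_range.mpr (by omega)
    rw [← Finset.add_sum_erase _ _ hjr]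
    have h1 : ‖a j ω * z ^ j‖ = ‖a j ω‖ * t ^ j := by
      rw [norm_mul, norm_pow, hz]
    have h2 : ‖∑ k ∈ (Finset.range (n+1)).erase j, a k ω * z ^ k‖
        ≤ ∑ k ∈ (Finset.range (n+1)).erase j, ‖a k ω‖ * t ^ k := by
      refine (norm_sum_le _ _).trans (Finset.sum_le_sum fun k _ => ?_)
      rw [norm_mul, norm_pow, hz]
    calc Δ ≤ ‖a j ω * z ^ j‖ - ‖∑ k ∈ (Finset.range (n+1)).erase j, a k ω * z ^ k‖ := by
            rw [h1]; linarith [h2]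
      _ ≤ ‖a j ω * z ^ j + ∑ k ∈ (Finset.range (n+1)).erase j, a k ω * z ^ k‖ := by
            have := norm_sub_norm_le (a j ω * z ^ j)
              (-∑ k ∈ (Finset.range (n+1)).erase j, a k ω * z ^ k)
            simpa [sub_neg_eq_add] using this
  have hp0 : ‖(kacPoly a n ω).eval 0‖ < Δ := by
    rw [kacPoly_eval]
    have : ∑ k ∈ Finset.range (n + 1), a k ω * (0:ℂ) ^ k = a 0 ω := by
      rw [Finset.sum_eq_single 0]
      · simp
      · intro b _ hb; simp [zero_pow hb]
      · simp
    rw [this]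
    exact hΔgt
  obtain ⟨z, hzle, hzroot⟩ := exists_root_of_sphere_lb _ t Δ ht hΔpos hsph hp0
  have hpne : kacPoly a n ω ≠ 0 := by
    intro hcontra
    have := hsph (t:ℂ) (by simp [abs_of_pos ht])
    rw [hcontra] at this
    simp at this
    linarith
  calc minRootMod (kacPoly a n ω) ≤ ‖z‖ := minRootMod_le_of_root hpne hzroot
    _ ≤ t := hzle



lemma prod_one_sub_ge (s : Finset ℕ) (x : ℕ → ℝ) (h0 : ∀ i ∈ s, 0 ≤ x i)
    (h1 : ∀ i ∈ s, x i ≤ 1) :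
    1 - ∑ i ∈ s, x i ≤ ∏ i ∈ s, (1 - x i) := by
  classical
  induction s using Finset.induction_on with
  | empty => simp
  | @insert c s' hns ih =>
    rw [Finset.sum_insert hns, Finset.prod_insert hns]
    have hc0 : 0 ≤ x c := h0 c (Finset.mem_insert_self c s')
    have hc1 : x c ≤ 1 := h1 c (Finset.mem_insert_self c s')
    have ih' := ih (fun i hi => h0 i (Finset.mem_insert_of_mem hi))
      (fun i hi => h1 i (Finset.mem_insert_of_mem hi))
    have hprod1 : ∏ i ∈ s', (1 - x i) ≤ 1 := by
      apply Finset.prod_le_one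
      · intro i hi
        linarith [h1 i (Finset.mem_insert_of_mem hi)]
      · intro i hi
        linarith [h0 i (Finset.mem_insert_of_mem hi)]
    nlinarith

lemma sum_range_two_mul (n : ℕ) (f : ℕ → ℝ) :
    ∑ i ∈ Finset.range (2*n), f i = ∑ j ∈ Finset.range n, (f (2*j) + f (2*j+1)) := by
  induction n with
  | zero => simp
  | succ m ih =>
    have h2 : 2*(m+1) = (2*m+1)+1 := by ring
    rw [h2, Finset.sum_range_succ, Finset.sum_range_succ, ih, Finset.sum_range_succ]
    ring

lemma sum_range_half_le (n : ℕ) : ∑ i ∈ Finset.range n, ((1:ℝ)/2)^i ≤ 2 := by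
  have key : ∀ m : ℕ, ∑ i ∈ Finset.range m, ((1:ℝ)/2)^i = 2 - 2*((1:ℝ)/2)^m := by
    intro m
    induction m with
    | zero => simp
    | succ l ih =>
      rw [Finset.sum_range_succ, ih, pow_succ]
      ring
  rw [key n]
  have : (0:ℝ) ≤ ((1:ℝ)/2)^n := by positivity
  linarith


set_option maxHeartbeats 1000000 in
/-- For i.i.d. complex coefficients with `|a₀|` not a.s. constant and
`ℙ(a₀ = 0) = 0`, there are constants `C₁, r, A > 0` (depending only on the law of `|a₀|`)
such that for every `n ≥ 1` and every `0 < t < C₁`,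
`ℙ(x₁⁽ⁿ⁾ ≤ t) ≥ A · ℙ(|a₀| ≤ r t / 2)`. -/
theorem minRootMod_lower_tail_bound
    {Ω : Type*} [MeasurableSpace Ω] (μ : Measure Ω) [IsProbabilityMeasure μ]
    (a : ℕ → Ω → ℂ) (hmeas : ∀ k, Measurable (a k))
    (hindep : iIndepFun a μ)
    (hid : ∀ k, IdentDistrib (a k) (a 0) μ μ)
    (hnc : ¬ ∃ c : ℝ, 0 ≤ c ∧ μ {ω | ‖a 0 ω‖ = c} = 1)
    (h0 : μ {ω | a 0 ω = 0} = 0) :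
    ∃ C₁ r A : ℝ, 0 < C₁ ∧ 0 < r ∧ 0 < A ∧
      ∀ n : ℕ, 1 ≤ n → ∀ t : ℝ, 0 < t → t < C₁ →
        ENNReal.ofReal A * μ {ω | ‖a 0 ω‖ ≤ r * t / 2} ≤
          μ {ω | minRootMod (kacPoly a n ω) ≤ t} := by
  classical
  have habsm : ∀ k, Measurable (fun ω => ‖a k ω‖) :=
    fun k => continuous_norm.measurable.comp (hmeas k)
  have hVmeasC : ∀ u : ℝ, MeasurableSet {x : ℂ | u < ‖x‖} :=
    fun u => measurableSet_lt measurable_const continuous_norm.measurable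
  have hVmeasC' : ∀ c : ℝ, MeasurableSet {x : ℂ | ‖x‖ ≤ c} :=
    fun c => measurableSet_le continuous_norm.measurable measurable_const
  have hVmeas : ∀ (k : ℕ) (u : ℝ), MeasurableSet {ω | u < ‖a k ω‖} :=
    fun k u => (hmeas k) (hVmeasC u)
  have hVmeas' : ∀ (k : ℕ) (c : ℝ), MeasurableSet {ω | ‖a k ω‖ ≤ c} :=
    fun k c => (hmeas k) (hVmeasC' c)
  have htrans : ∀ (k : ℕ) (u : ℝ),
      μ {ω | u < ‖a k ω‖} = μ {ω | u < ‖a 0 ω‖} :=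
    fun k u => (hid k).measure_mem_eq (hVmeasC u)
  have htrans' : ∀ (k : ℕ) (c : ℝ),
      μ {ω | ‖a k ω‖ ≤ c} = μ {ω | ‖a 0 ω‖ ≤ c} :=
    fun k c => (hid k).measure_mem_eq (hVmeasC' c)
  set g : ℝ → ENNReal := fun u => μ {ω | u < ‖a 0 ω‖} with hgdef
  have hgfin : ∀ u, g u ≠ ⊤ := fun u => (measure_lt_top μ _).ne
  have hgle1 : ∀ u, g u ≤ 1 := fun u => prob_le_one
  set G : ℝ → ℝ := fun u => (g u).toReal with hGdef
  have hG0 : ∀ u, 0 ≤ G u := fun u => ENNReal.toReal_nonneg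
  have hG1 : ∀ u, G u ≤ 1 := by
    intro u
    have := ENNReal.toReal_mono (by simp) (hgle1 u)
    simpa using this
  have hGanti : ∀ u v : ℝ, u ≤ v → G v ≤ G u := by
    intro u v huv
    exact ENNReal.toReal_mono (hgfin u) (measure_mono (fun ω h => lt_of_le_of_lt huv h))
  have hgofReal : ∀ u, g u = ENNReal.ofReal (G u) := by
    intro u
    rw [hGdef, ENNReal.ofReal_toReal (hgfin u)]
  -- complement
  have hcomplR : ∀ c : ℝ, (μ {ω | ‖a 0 ω‖ ≤ c}).toReal = 1 - G c := by
    intro c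
    have hset : {ω | ‖a 0 ω‖ ≤ c} = {ω | c < ‖a 0 ω‖}ᶜ := by
      ext ω; simp [not_lt]
    rw [hset, prob_compl_eq_one_sub (hVmeas 0 c)]
    rw [ENNReal.toReal_sub_of_le (hgle1 c) (by simp)]
    simp [hGdef, hgdef]
  -- M₁
  have hpos1 : μ {ω | 0 < ‖a 0 ω‖} = 1 := by
    have hset : {ω | 0 < ‖a 0 ω‖} = {ω | a 0 ω = 0}ᶜ := by
      ext ω
      simp [norm_pos_iff]
    rw [hset, prob_compl_eq_one_sub, h0]
    · simp
    · exact (hmeas 0) (measurableSet_singleton 0)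
  obtain ⟨M₁, hM₁pos, hM₁⟩ : ∃ M₁ : ℝ, 0 < M₁ ∧ ∀ u : ℝ, u < M₁ → 1/2 ≤ G u := by
    by_contra hcon
    push_neg at hcon
    have hkey : ∀ m : ℕ, μ {ω | 1/(m+1 : ℝ) < ‖a 0 ω‖} < ENNReal.ofReal (1/2) := by
      intro m
      obtain ⟨u, hu, hGu⟩ := hcon (1/(m+1:ℝ)) (by positivity)
      have : g (1/(m+1:ℝ)) ≤ g u := by
        exact measure_mono (fun ω h => lt_of_le_of_lt hu.le h)
      calc μ {ω | 1/(m+1 : ℝ) < ‖a 0 ω‖} ≤ g u := this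
        _ < ENNReal.ofReal (1/2) := by
            rw [hgofReal u]
            exact (ENNReal.ofReal_lt_ofReal_iff (by norm_num)).mpr hGu
    -- union of the sets is the full positivity set
    have hmono : Monotone (fun m : ℕ => {ω | 1/(m+1 : ℝ) < ‖a 0 ω‖}) := by
      intro m m' hmm ω h
      have : 1/(m'+1:ℝ) ≤ 1/(m+1:ℝ) := by
        apply one_div_le_one_div_of_le (by positivity)
        exact_mod_cast by omega
      exact lt_of_le_of_lt this h
    have hunion : (⋃ m : ℕ, {ω | 1/(m+1 : ℝ) < ‖a 0 ω‖})
        = {ω | 0 < ‖a 0 ω‖} := by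
      ext ω
      simp only [Set.mem_iUnion, Set.mem_setOf_eq]
      constructor
      · rintro ⟨m, hm⟩
        exact lt_trans (by positivity) hm
      · intro hω
        obtain ⟨m, hm⟩ := exists_nat_one_div_lt hω
        exact ⟨m, hm⟩
    have := (hmono.directed_le).measure_iUnion (μ := μ)
    rw [hunion, hpos1] at this
    have hle : (1 : ENNReal) ≤ ENNReal.ofReal (1/2) := by
      rw [this]
      exact iSup_le fun m => (hkey m).le
    have : ENNReal.ofReal (1/2 : ℝ) < 1 := ENNReal.ofReal_lt_one.mpr (by norm_num)
    exact absurd hle (not_le.mpr this)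
  -- tail
  have htail : ∀ δ : ℝ, 0 < δ → ∃ c : ℝ, 0 < c ∧ G c < δ := by
    intro δ hδ
    have hinter : (⋂ m : ℕ, {ω | (m : ℝ) < ‖a 0 ω‖}) = ∅ := by
      ext ω
      simp only [Set.mem_iInter, Set.mem_setOf_eq, Set.mem_empty_iff_false, iff_false, not_forall,
        not_lt]
      obtain ⟨m, hm⟩ := exists_nat_gt (‖a 0 ω‖)
      exact ⟨m, hm.le⟩
    have htends : Tendsto (fun m : ℕ => μ {ω | (m:ℝ) < ‖a 0 ω‖}) atTop (nhds 0) := by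
      have h1 := tendsto_measure_iInter_atTop (μ := μ)
        (s := fun m : ℕ => {ω | (m : ℝ) < ‖a 0 ω‖})
        (fun m => (hVmeas 0 m).nullMeasurableSet)
        (fun m m' hmm => by
          intro ω h
          simp only [Set.mem_setOf_eq] at h ⊢
          have : (m:ℝ) ≤ (m':ℝ) := by exact_mod_cast hmm
          linarith)
        ⟨0, (measure_lt_top μ _).ne⟩
      rw [hinter] at h1
      simpa [Function.comp_def] using h1
    have hev : ∀ᶠ m : ℕ in atTop, μ {ω | (m:ℝ) < ‖a 0 ω‖} < ENNReal.ofReal δ := by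
      apply htends.eventually_lt_const
      simpa using (ENNReal.ofReal_pos.mpr hδ)
    obtain ⟨m, hm⟩ := hev.exists
    refine ⟨(m:ℝ) + 1, by positivity, ?_⟩
    have h1 : g ((m:ℝ)+1) ≤ g (m:ℝ) := by
      apply measure_mono
      intro ω h
      simp only [Set.mem_setOf_eq] at h ⊢
      linarith
    have h2 : g (m:ℝ) < ENNReal.ofReal δ := hm
    exact ENNReal.toReal_lt_of_lt_ofReal (lt_of_le_of_lt h1 h2)
  -- the chosen constants
  set rr : ℝ := (1/100)^2 * M₁ with hrrdef
  have hrrpos : 0 < rr := by positivity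
  refine ⟨1/10^10, rr, 1/128, by norm_num, hrrpos, by norm_num, ?_⟩
  intro n hn t ht htC
  -- ### per (n,t) setup
  set τ : ℝ := Real.sqrt t with hτdef
  have hτpos : 0 < τ := Real.sqrt_pos.mpr ht
  have hτlt : τ < 1/100000 := by
    rw [hτdef]
    rw [show (1:ℝ)/100000 = Real.sqrt ((1/100000)^2) by
      rw [Real.sqrt_sq (by norm_num)]]
    apply Real.sqrt_lt_sqrt ht.le
    have h1 : ((1:ℝ)/100000)^2 = 1/10^10 := by norm_num
    linarith
  have hτhalf : τ ≤ 1/2 := by linarith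
  have hττ : τ * τ = t := Real.mul_self_sqrt ht.le
  set σ : ℝ := τ⁻¹ with hσdef
  have hσpos : 0 < σ := by positivity
  have hστ : σ * τ = 1 := inv_mul_cancel₀ hτpos.ne'
  have hσt : σ * t = τ := by
    rw [← hττ, hσdef]
    field_simp
  have hσbig : 100000 < σ := by
    rw [hσdef]
    rw [show (100000:ℝ) = (1/100000)⁻¹ by norm_num]
    exact (inv_lt_inv₀ (by norm_num) hτpos).mpr hτlt
  have hσ1 : 1 ≤ σ := by linarith
  have hσ2t : σ^2 * t = 1 := by
    have : σ^2 * t = σ * (σ * t) := by ring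
    rw [this, hσt, hστ]
  have hσpow1 : ∀ i : ℕ, (1:ℝ) ≤ σ^i := fun i => one_le_pow₀ hσ1
  have hσpowpos : ∀ i : ℕ, (0:ℝ) < σ^i := fun i => pow_pos hσpos i
  -- counting functions
  set Ntil : ℝ → ℝ := fun y => ∑ i ∈ Finset.range n, G (y * σ^i) with hNtildef
  set NN : ℝ → ℝ := fun y => ∑ i ∈ Finset.range n, G (y * (σ^2)^i) with hNNdef
  have hNtil_nonneg : ∀ y, 0 ≤ Ntil y :=
    fun y => Finset.sum_nonneg fun i _ => hG0 _
  have hNtil_anti : ∀ y y' : ℝ, 0 ≤ y → y ≤ y' → Ntil y' ≤ Ntil y := by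
    intro y y' hy hyy'
    apply Finset.sum_le_sum
    intro i _
    apply hGanti
    have := hσpowpos i
    nlinarith
  have hGNtil : ∀ y : ℝ, G y ≤ Ntil y := by
    intro y
    have h1 : G (y * σ^0) ≤ Ntil y := by
      apply Finset.single_le_sum (f := fun i => G (y * σ^i)) (fun i _ => hG0 _)
      simp only [Finset.mem_range]
      omega
    simpa using h1
  have hNtilNN : ∀ y : ℝ, 0 ≤ y → Ntil y ≤ 2 * NN y := by
    intro y hy
    have h1 : Ntil y ≤ ∑ i ∈ Finset.range (2*n), G (y * σ^i) := by
      apply Finset.sum_le_sum_of_subset_of_nonneg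
      · apply Finset.range_subset_range.mpr
        omega
      · intro i _ _
        exact hG0 _
    have h2 : ∑ i ∈ Finset.range (2*n), G (y * σ^i)
        = ∑ j ∈ Finset.range n, (G (y * σ^(2*j)) + G (y * σ^(2*j+1))) :=
      sum_range_two_mul n (fun i => G (y * σ^i))
    have h3 : ∀ j ∈ Finset.range n, G (y * σ^(2*j)) + G (y * σ^(2*j+1))
        ≤ 2 * G (y * (σ^2)^j) := by
      intro j _
      have hpow : (σ^2)^j = σ^(2*j) := by rw [← pow_mul]
      have hle : G (y * σ^(2*j+1)) ≤ G (y * σ^(2*j)) := by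
        apply hGanti
        rw [pow_succ]
        nlinarith [mul_nonneg (mul_nonneg hy (hσpowpos (2*j)).le) (sub_nonneg.mpr hσ1)]
      rw [hpow]
      linarith
    calc Ntil y ≤ ∑ i ∈ Finset.range (2*n), G (y * σ^i) := h1
      _ = _ := h2
      _ ≤ ∑ j ∈ Finset.range n, 2 * G (y * (σ^2)^j) := Finset.sum_le_sum h3
      _ = 2 * NN y := by rw [Finset.mul_sum]
  -- window lemma : sum over k ∈ Icc 2 n of G (z σ^{k-1}) ≤ Ntil (z*σ)
  have hwin : ∀ z : ℝ, ∑ k ∈ Finset.Icc 2 n, G (z * σ^(k-1)) ≤ Ntil (z * σ) := by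
    intro z
    have hIcc : Finset.Icc 2 n = Finset.Ico 2 (n+1) := by
      rw [Finset.Ico_add_one_right_eq_Icc]
    rw [hIcc, Finset.sum_Ico_eq_sum_range]
    have h1 : ∀ i ∈ Finset.range (n+1-2), G (z * σ^(2+i-1)) = G ((z*σ) * σ^i) := by
      intro i _
      congr 1
      have : 2+i-1 = i+1 := by omega
      rw [this, pow_succ]
      ring
    rw [Finset.sum_congr rfl h1]
    apply Finset.sum_le_sum_of_subset_of_nonneg
    · apply Finset.range_subset_range.mpr
      omega
    · intro i _ _
      exact hG0 _
  -- the sum over all k ∈ Icc 1 n of caps equals Ntil via reindex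
  have hIccRange : ∀ h : ℕ → ℝ, ∑ k ∈ Finset.Icc 1 n, h k = ∑ i ∈ Finset.range n, h (1+i) := by
    intro h
    rw [show Finset.Icc 1 n = Finset.Ico 1 (n+1) by rw [Finset.Ico_add_one_right_eq_Icc],
      Finset.sum_Ico_eq_sum_range]
    simp
  have hcapsum : ∀ L : ℝ, ∑ k ∈ Finset.Icc 1 n, G (L * σ^(k-1)) = Ntil L := by
    intro L
    rw [hIccRange]
    apply Finset.sum_congr rfl
    intro i _
    have h1 : 1+i-1 = i := by omega
    rw [h1]
  -- geometric bound
  have hgeom : ∑ k ∈ Finset.Icc 1 n, τ^(k-1) ≤ 2 := by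
    rw [hIccRange (fun k => τ^(k-1))]
    have h1 : ∀ i ∈ Finset.range n, τ^(1+i-1) ≤ ((1:ℝ)/2)^i := by
      intro i _
      have : 1+i-1 = i := by omega
      rw [this]
      exact pow_le_pow_left₀ hτpos.le hτhalf i
    calc ∑ i ∈ Finset.range n, τ^(1+i-1) ≤ ∑ i ∈ Finset.range n, ((1:ℝ)/2)^i :=
          Finset.sum_le_sum h1
      _ ≤ 2 := sum_range_half_le n
  -- S and Y
  set S : Set ℝ := {y : ℝ | 0 < y ∧ 1/8 ≤ Ntil y} with hSdef
  have hSmem : M₁/2 ∈ S := by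
    constructor
    · positivity
    · have h1 : 1/2 ≤ G (M₁/2) := hM₁ _ (by linarith)
      linarith [hGNtil (M₁/2)]
  have hSne : S.Nonempty := ⟨M₁/2, hSmem⟩
  obtain ⟨cb, hcbpos, hcb⟩ := htail (1/(8*(n:ℝ))) (by positivity)
  have hSbdd : BddAbove S := by
    refine ⟨max cb 1, ?_⟩
    intro y hy
    by_contra hyc
    push_neg at hyc
    obtain ⟨hypos, hyN⟩ := hy
    have hycb : cb < y := lt_of_le_of_lt (le_max_left _ _) hyc
    have hbound : Ntil y < 1/8 := by
      have hterm : ∀ i ∈ Finset.range n, G (y * σ^i) < 1/(8*(n:ℝ)) := by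
        intro i _
        have h1 : cb ≤ y * σ^i := by
          have := hσpow1 i
          nlinarith
        exact lt_of_le_of_lt (hGanti _ _ h1) hcb
      have h2 : ∑ i ∈ Finset.range n, G (y * σ^i) < ∑ _i ∈ Finset.range n, 1/(8*(n:ℝ)) := by
        apply Finset.sum_lt_sum_of_nonempty
        · exact Finset.nonempty_range_iff.mpr (by omega)
        · exact hterm
      have h2' : Ntil y = ∑ i ∈ Finset.range n, G (y * σ^i) := by rw [hNtildef]
      have h3 : ∑ _i ∈ Finset.range n, 1/(8*(n:ℝ)) = 1/8 := by
        rw [Finset.sum_const, Finset.card_range]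
        have hnne : (n:ℝ) ≠ 0 := by positivity
        field_simp
        rw [nsmul_eq_mul]
        field_simp
      linarith
    linarith
  set Y : ℝ := sSup S with hYdef
  have hYge : M₁/2 ≤ Y := le_csSup hSbdd hSmem
  have hYpos : 0 < Y := by
    have : (0:ℝ) < M₁/2 := by positivity
    linarith
  have hYM₁ : M₁ ≤ Y := by
    by_contra hc
    push_neg at hc
    have hymem : (Y + M₁)/2 ∈ S := by
      constructor
      · positivity
      · have h1 : 1/2 ≤ G ((Y + M₁)/2) := hM₁ _ (by linarith)
        linarith [hGNtil ((Y + M₁)/2)]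
    have := le_csSup hSbdd hymem
    linarith
  have hupper : ∀ y : ℝ, Y < y → Ntil y < 1/8 := by
    intro y hy
    by_contra hc
    push_neg at hc
    have : y ∈ S := ⟨lt_trans hYpos hy, hc⟩
    have := le_csSup hSbdd this
    linarith
  have hlower : ∀ y : ℝ, 0 < y → y < Y → 1/8 ≤ Ntil y := by
    intro y hypos hy
    obtain ⟨y', hy'S, hyy'⟩ := exists_lt_of_lt_csSup hSne hy
    exact le_trans hy'S.2 (hNtil_anti _ _ hypos.le hyy'.le)
  have hNNex : 1/16 ≤ NN (9/10*Y) := by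
    have h1 : 1/8 ≤ Ntil (9/10*Y) := hlower _ (by positivity) (by linarith)
    have h2 := hNtilNN (9/10*Y) (by positivity)
    linarith

  set A₀ : Set Ω := {ω | ‖a 0 ω‖ ≤ rr*t/2} with hA₀def
  -- #### CORE lemma
  have hcore : ∀ (L : ℝ) (J : Finset ℕ) (v : ℕ → ℝ),
      J ⊆ Finset.Icc 1 n → 0 < L →
      (∀ j ∈ J, rr + 2*L ≤ v j * t^(j-1)) →
      (∀ j ∈ J, L * σ^(j-1) < v j) →
      (∀ j ∈ J, ∑ k ∈ (Finset.Icc 1 n).erase j, G (L * σ^(k-1)) ≤ 7/8) →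
      ENNReal.ofReal ((∑ j ∈ J, G (v j)) * (1/8)) * μ A₀
        ≤ μ {ω | minRootMod (kacPoly a n ω) ≤ t} := by
    intro L J v hJsub hLpos hmargin hsep hcapbound
    set E : ℕ → Set Ω := fun j => ({ω | v j < ‖a j ω‖}
      ∩ ⋂ k ∈ (Finset.Icc 1 n).erase j, {ω | ‖a k ω‖ ≤ L * σ^(k-1)}) with hEdef
    have hEmeas : ∀ j, MeasurableSet (E j) := by
      intro j
      exact (hVmeas j (v j)).inter
        (Finset.measurableSet_biInter _ (fun k _ => hVmeas' k _))
    -- inclusion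
    have hincl : ∀ j ∈ J, A₀ ∩ E j ⊆ {ω | minRootMod (kacPoly a n ω) ≤ t} := by
      intro j hj ω hω
      have hω0 : ω ∈ A₀ := hω.1
      have hωv : v j < ‖a j ω‖ := hω.2.1
      have hωcap := hω.2.2
      have hωcap' : ∀ k ∈ (Finset.Icc 1 n).erase j,
          ‖a k ω‖ ≤ L * σ^(k-1) := by
        intro k hk
        exact Set.mem_iInter₂.mp hωcap k hk
      simp only [Set.mem_setOf_eq]
      apply dominance_minRootMod a n ω t rr ht hrrpos j (hJsub hj) _ hω0
      -- the dominance inequality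
      have hsum1 : ∑ k ∈ (Finset.Icc 1 n).erase j, ‖a k ω‖ * t^(k-1)
          ≤ ∑ k ∈ (Finset.Icc 1 n).erase j, L * τ^(k-1) := by
        apply Finset.sum_le_sum
        intro k hk
        have h1 : ‖a k ω‖ * t^(k-1) ≤ (L * σ^(k-1)) * t^(k-1) :=
          mul_le_mul_of_nonneg_right (hωcap' k hk) (pow_nonneg ht.le _)
        have h2 : (L * σ^(k-1)) * t^(k-1) = L * τ^(k-1) := by
          rw [mul_assoc, ← mul_pow, hσt]
        linarith
      have hsum2 : ∑ k ∈ (Finset.Icc 1 n).erase j, L * τ^(k-1)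
          ≤ L * ∑ k ∈ Finset.Icc 1 n, τ^(k-1) := by
        rw [← Finset.mul_sum]
        apply mul_le_mul_of_nonneg_left _ hLpos.le
        apply Finset.sum_le_sum_of_subset_of_nonneg (Finset.erase_subset _ _)
        intro k _ _
        positivity
      have hsum3 : L * ∑ k ∈ Finset.Icc 1 n, τ^(k-1) ≤ 2*L := by
        nlinarith [hgeom]
      have hstrict : v j * t^(j-1) < ‖a j ω‖ * t^(j-1) :=
        mul_lt_mul_of_pos_right hωv (pow_pos ht _)
      have := hmargin j hj
      linarith
    -- per-j measure lower bound
    have hEj : ∀ j ∈ J, ENNReal.ofReal (G (v j) * (1/8)) * μ A₀ ≤ μ (A₀ ∩ E j) := by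
      intro j hj
      have hjmem := hJsub hj
      have hj1 : 1 ≤ j := (Finset.mem_Icc.mp hjmem).1
      have hj0 : j ≠ 0 := by omega
      classical
      set sets : ℕ → Set Ω := fun k =>
        if k = 0 then A₀ else if k = j then {ω | v j < ‖a k ω‖}
          else {ω | ‖a k ω‖ ≤ L * σ^(k-1)} with hsetsdef
      have h0notin : (0:ℕ) ∉ Finset.Icc 1 n := by simp
      have hkk : ∀ k (_ : k ∈ (Finset.Icc 1 n).erase j),
          sets k = {ω | ‖a k ω‖ ≤ L * σ^(k-1)} := by
        intro k hk
        have hk0 : k ≠ 0 := by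
          have := (Finset.mem_Icc.mp (Finset.mem_of_mem_erase hk)).1
          omega
        have hkj : k ≠ j := Finset.ne_of_mem_erase hk
        simp [hsetsdef, hk0, hkj]
      have hset_eq : A₀ ∩ E j = ⋂ k ∈ insert 0 (Finset.Icc 1 n), sets k := by
        rw [Finset.set_biInter_insert]
        have hs0 : sets 0 = A₀ := by simp [hsetsdef]
        rw [hs0]
        congr 1
        rw [← Finset.insert_erase hjmem, Finset.set_biInter_insert]
        have hsj : sets j = {ω | v j < ‖a j ω‖} := by
          simp [hsetsdef, hj0]
        rw [hsj]
        show ({ω | v j < ‖a j ω‖}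
          ∩ ⋂ k ∈ (Finset.Icc 1 n).erase j, {ω | ‖a k ω‖ ≤ L * σ^(k-1)}) = _
        congr 1
        exact (Set.iInter₂_congr hkk).symm
      have hprod : μ (⋂ k ∈ insert 0 (Finset.Icc 1 n), sets k)
          = ∏ k ∈ insert 0 (Finset.Icc 1 n), μ (sets k) := by
        apply hindep.meas_biInter
        intro k _
        simp only [hsetsdef]
        split_ifs with h1 h2
        · subst h1
          exact ⟨{x : ℂ | ‖x‖ ≤ rr*t/2}, hVmeasC' _, rfl⟩
        · exact ⟨{x : ℂ | v j < ‖x‖}, hVmeasC _, rfl⟩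
        · exact ⟨{x : ℂ | ‖x‖ ≤ L * σ^(k-1)}, hVmeasC' _, rfl⟩
      have hprodsplit : ∏ k ∈ insert 0 (Finset.Icc 1 n), μ (sets k)
          = μ A₀ * (μ (sets j) * ∏ k ∈ (Finset.Icc 1 n).erase j, μ (sets k)) := by
        rw [Finset.prod_insert h0notin]
        have hs0 : sets 0 = A₀ := by simp [hsetsdef]
        rw [hs0, ← Finset.mul_prod_erase _ _ hjmem]
      have hμsetsj : μ (sets j) = ENNReal.ofReal (G (v j)) := by
        have hsj : sets j = {ω | v j < ‖a j ω‖} := by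
          simp [hsetsdef, hj0]
        rw [hsj, htrans j (v j), ← hgofReal]
      have hμsetsk : ∀ k ∈ (Finset.Icc 1 n).erase j,
          μ (sets k) = ENNReal.ofReal (1 - G (L * σ^(k-1))) := by
        intro k hk
        have hk0 : k ≠ 0 := by
          have := (Finset.mem_Icc.mp (Finset.mem_of_mem_erase hk)).1
          omega
        have hkj : k ≠ j := Finset.ne_of_mem_erase hk
        have hsk : sets k = {ω | ‖a k ω‖ ≤ L * σ^(k-1)} := by
          simp [hsetsdef, hk0, hkj]
        rw [hsk, htrans' k _, ← hcomplR,
          ENNReal.ofReal_toReal (measure_lt_top μ _).ne]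
      have hprodtail : ENNReal.ofReal (1/8)
          ≤ ∏ k ∈ (Finset.Icc 1 n).erase j, μ (sets k) := by
        rw [Finset.prod_congr rfl hμsetsk,
          ← ENNReal.ofReal_prod_of_nonneg (fun k _ => by linarith [hG1 (L * σ^(k-1))])]
        apply ENNReal.ofReal_le_ofReal
        have := prod_one_sub_ge ((Finset.Icc 1 n).erase j) (fun k => G (L * σ^(k-1)))
          (fun k _ => hG0 _) (fun k _ => hG1 _)
        have hcb := hcapbound j hj
        linarith
      calc ENNReal.ofReal (G (v j) * (1/8)) * μ A₀
          = μ A₀ * (ENNReal.ofReal (G (v j)) * ENNReal.ofReal (1/8)) := by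
            rw [← ENNReal.ofReal_mul (hG0 _)]
            ring
        _ ≤ μ A₀ * (μ (sets j) * ∏ k ∈ (Finset.Icc 1 n).erase j, μ (sets k)) := by
            apply mul_le_mul_right
            rw [hμsetsj]
            exact mul_le_mul_right hprodtail _
        _ = μ (A₀ ∩ E j) := by rw [← hprodsplit, ← hprod, ← hset_eq]
    -- disjointness
    have hdisj : Set.PairwiseDisjoint (J : Set ℕ) (fun j => A₀ ∩ E j) := by
      intro i hi j hj hij
      simp only [Function.onFun]
      rw [Set.disjoint_left]
      intro ω hωi hωj
      have h1 : v i < ‖a i ω‖ := hωi.2.1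
      have h2 : ‖a i ω‖ ≤ L * σ^(i-1) := by
        have hmem : i ∈ (Finset.Icc 1 n).erase j :=
          Finset.mem_erase.mpr ⟨hij, hJsub hi⟩
        exact Set.mem_iInter₂.mp hωj.2.2 i hmem
      have h3 := hsep i hi
      linarith
    have hmeasAE : ∀ j ∈ J, MeasurableSet (A₀ ∩ E j) :=
      fun j _ => (hVmeas' 0 _).inter (hEmeas j)
    have hsumU : μ (⋃ j ∈ J, (A₀ ∩ E j)) = ∑ j ∈ J, μ (A₀ ∩ E j) :=
      measure_biUnion_finset hdisj hmeasAE
    calc ENNReal.ofReal ((∑ j ∈ J, G (v j)) * (1/8)) * μ A₀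
        = (∑ j ∈ J, ENNReal.ofReal (G (v j) * (1/8))) * μ A₀ := by
          rw [Finset.sum_mul, ENNReal.ofReal_sum_of_nonneg
            (fun j _ => by have := hG0 (v j); positivity)]
      _ = ∑ j ∈ J, ENNReal.ofReal (G (v j) * (1/8)) * μ A₀ := by
          rw [Finset.sum_mul]
      _ ≤ ∑ j ∈ J, μ (A₀ ∩ E j) := Finset.sum_le_sum hEj
      _ = μ (⋃ j ∈ J, (A₀ ∩ E j)) := hsumU.symm
      _ ≤ μ {ω | minRootMod (kacPoly a n ω) ≤ t} := by
          apply measure_mono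
          exact Set.iUnion₂_subset hincl

  -- #### the two cases
  have hIcc2erase : (Finset.Icc 1 n).erase 1 = Finset.Icc 2 n := by
    ext k
    simp only [Finset.mem_erase, Finset.mem_Icc]
    omega
  have hIccsplit : Finset.Icc 1 n = insert 1 (Finset.Icc 2 n) := by
    ext k
    simp only [Finset.mem_insert, Finset.mem_Icc]
    omega
  have h1notin2 : (1:ℕ) ∉ Finset.Icc 2 n := by simp
  have hfinal : ENNReal.ofReal (1/128) * μ A₀
      ≤ μ {ω | minRootMod (kacPoly a n ω) ≤ t} := by
    rcases le_or_gt (G ((1/100)*Y)) (3/4) with hc1 | hc2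
    · -- many candidates
      have hcaps : ∀ j ∈ Finset.Icc 1 n,
          ∑ k ∈ (Finset.Icc 1 n).erase j, G ((1/100)*Y * σ^(k-1)) ≤ 7/8 := by
        intro j hj
        have h1 : ∑ k ∈ (Finset.Icc 1 n).erase j, G ((1/100)*Y * σ^(k-1))
            ≤ ∑ k ∈ Finset.Icc 1 n, G ((1/100)*Y * σ^(k-1)) := by
          apply Finset.sum_le_sum_of_subset_of_nonneg (Finset.erase_subset _ _)
          intro k _ _
          exact hG0 _
        have h2 : ∑ k ∈ Finset.Icc 1 n, G ((1/100)*Y * σ^(k-1))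
            = G ((1/100)*Y) + ∑ k ∈ Finset.Icc 2 n, G ((1/100)*Y * σ^(k-1)) := by
          rw [hIccsplit, Finset.sum_insert h1notin2]
          simp
        have h3 : Ntil ((1/100)*Y*σ) < 1/8 := by
          apply hupper
          nlinarith
        have h4 := hwin ((1/100)*Y)
        linarith
      have hsep : ∀ j ∈ Finset.Icc 1 n,
          (1/100)*Y * σ^(j-1) < (fun j => 9/10*Y*(σ^2)^(j-1)) j := by
        intro j hj
        simp only
        have h1 : σ^(j-1) ≤ (σ^2)^(j-1) := by
          rw [← pow_mul]
          apply pow_le_pow_right₀ hσ1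
          omega
        nlinarith [hσpowpos (j-1)]
      have hmargin : ∀ j ∈ Finset.Icc 1 n,
          rr + 2*((1/100)*Y) ≤ (fun j => 9/10*Y*(σ^2)^(j-1)) j * t^(j-1) := by
        intro j hj
        simp only
        have hpow1 : (σ^2)^(j-1) * t^(j-1) = 1 := by
          rw [← mul_pow, hσ2t, one_pow]
        have heq : (9/10*Y*(σ^2)^(j-1)) * t^(j-1) = 9/10*Y := by
          calc (9/10*Y*(σ^2)^(j-1)) * t^(j-1) = 9/10*Y*((σ^2)^(j-1) * t^(j-1)) := by ring
            _ = 9/10*Y := by rw [hpow1]; ring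
        rw [heq, hrrdef]
        nlinarith
      have happ := hcore ((1/100)*Y) (Finset.Icc 1 n) (fun j => 9/10*Y*(σ^2)^(j-1))
        (subset_refl _) (by positivity) hmargin hsep hcaps
      have hsumv : ∑ j ∈ Finset.Icc 1 n, G (9/10*Y*(σ^2)^(j-1)) = NN (9/10*Y) := by
        rw [hIccRange (fun j => G (9/10*Y*(σ^2)^(j-1)))]
        apply Finset.sum_congr rfl
        intro i _
        have h1 : 1+i-1 = i := by omega
        rw [h1]
      refine le_trans ?_ happ
      apply mul_le_mul_left
      apply ENNReal.ofReal_le_ofReal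
      rw [hsumv]
      nlinarith [hNNex]
    · -- single large candidate
      set Sc : Set ℝ := {c : ℝ | 0 < c ∧ 1/4 ≤ G c} with hScdef
      have hScmem : (1/100)*Y ∈ Sc := ⟨by positivity, by linarith⟩
      have hScne : Sc.Nonempty := ⟨_, hScmem⟩
      obtain ⟨cb2, hcb2pos, hcb2⟩ := htail (1/4) (by norm_num)
      have hScbdd : BddAbove Sc := by
        refine ⟨max cb2 1, ?_⟩
        intro y hy
        by_contra hyc
        push_neg at hyc
        have h1 : cb2 < y := lt_of_le_of_lt (le_max_left _ _) hyc
        have h2 : G y ≤ G cb2 := hGanti _ _ h1.le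
        have := hy.2
        linarith
      set cstar : ℝ := sSup Sc with hcstardef
      have hcstar_ge : (1/100)*Y ≤ cstar := le_csSup hScbdd hScmem
      have hcstarpos : 0 < cstar := by
        have : (0:ℝ) < (1/100)*Y := by positivity
        linarith
      have hc9 : 1/4 ≤ G (9/10*cstar) := by
        obtain ⟨y', hy'S, hyy'⟩ := exists_lt_of_lt_csSup hScne (by nlinarith : 9/10*cstar < cstar)
        exact le_trans hy'S.2 (hGanti _ _ hyy'.le)
      have hJsub : ({1} : Finset ℕ) ⊆ Finset.Icc 1 n := by
        simp only [Finset.singleton_subset_iff, Finset.mem_Icc]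
        omega
      have hcaps : ∀ j ∈ ({1} : Finset ℕ),
          ∑ k ∈ (Finset.Icc 1 n).erase j, G ((1/100)*cstar * σ^(k-1)) ≤ 7/8 := by
        intro j hj
        have hj1 : j = 1 := Finset.mem_singleton.mp hj
        subst hj1
        rw [hIcc2erase]
        have h3 : Ntil ((1/100)*cstar*σ) < 1/8 := by
          apply hupper
          nlinarith
        have h4 := hwin ((1/100)*cstar)
        linarith
      have hsep : ∀ j ∈ ({1} : Finset ℕ),
          (1/100)*cstar * σ^(j-1) < (fun _ => 9/10*cstar) j := by
        intro j hj
        have hj1 : j = 1 := Finset.mem_singleton.mp hj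
        subst hj1
        simp only [pow_zero, mul_one]
        nlinarith
      have hmargin : ∀ j ∈ ({1} : Finset ℕ),
          rr + 2*((1/100)*cstar) ≤ (fun _ => 9/10*cstar) j * t^(j-1) := by
        intro j hj
        have hj1 : j = 1 := Finset.mem_singleton.mp hj
        subst hj1
        simp only [pow_zero, mul_one]
        have hrrle : rr ≤ (1/100)*cstar := by
          rw [hrrdef]
          nlinarith
        nlinarith
      have happ := hcore ((1/100)*cstar) ({1} : Finset ℕ) (fun _ => 9/10*cstar)
        hJsub (by positivity) hmargin hsep hcaps
      refine le_trans ?_ happ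
      apply mul_le_mul_left
      apply ENNReal.ofReal_le_ofReal
      rw [Finset.sum_singleton]
      nlinarith
  exact hfinal
end

section
/- Let a_0, a_1, a_2, ... be i.i.d. complex random variables such that |a_0| is not almost surely constant and ℙ(a_0 = 0) = 0. Suppose there exist a real k > 0, a > 0 and δ > 0 such that for all t with 0 < t < δ one has ℙ(|a_0| ≤ t) ≥ a t^k. Then for every integer n ≥ 1, the largest root modulus x_n^(n) of P_n(z) = ∑_{j=0}^n a_j z^j satisfies 𝔼[(x_n^(n))^k] = ∞. -/
open MeasureTheory ProbabilityTheory Polynomial Filter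

section Aux
open Set

lemma kacPoly_coeff {Ω : Type*} (a : ℕ → Ω → ℂ) (n : ℕ) (ω : Ω) (j : ℕ) :
    (kacPoly a n ω).coeff j = if j ≤ n then a j ω else 0 := by
  simp only [kacPoly, Polynomial.finset_sum_coeff, Polynomial.coeff_C_mul,
    Polynomial.coeff_X_pow, mul_ite, mul_one, mul_zero]
  rw [Finset.sum_ite_eq (Finset.range (n+1)) j (fun i => a i ω)]
  simp [Finset.mem_range, Nat.lt_succ_iff]

lemma abs_div_le_maxRootMod {Ω : Type*} (a : ℕ → Ω → ℂ) (n : ℕ) (hn : 1 ≤ n) (ω : Ω)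
    (h : a n ω ≠ 0) :
    ‖a (n-1) ω‖ / (n * ‖a n ω‖) ≤ maxRootMod (kacPoly a n ω) := by
  set p := kacPoly a n ω with hp
  have hcoeff : ∀ j, p.coeff j = if j ≤ n then a j ω else 0 := kacPoly_coeff a n ω
  have hpn : p.coeff n = a n ω := by rw [hcoeff]; simp
  have hdeg : p.natDegree = n := by
    refine le_antisymm (Polynomial.natDegree_le_iff_coeff_eq_zero.mpr fun m hm => ?_)
      (Polynomial.le_natDegree_of_ne_zero (by rw [hpn]; exact h))
    rw [hcoeff]; simp [Nat.not_le.mpr hm]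
  -- q is a monic multiple
  set q := Polynomial.C (a n ω)⁻¹ * p with hq
  have hqdeg : q.natDegree = n := by rw [hq, Polynomial.natDegree_C_mul (inv_ne_zero h), hdeg]
  have hmo : q.Monic := by
    rw [Polynomial.Monic, Polynomial.leadingCoeff, hqdeg, hq, Polynomial.coeff_C_mul, hpn]
    exact inv_mul_cancel₀ h
  have hroots : q.roots = p.roots := Polynomial.roots_C_mul p (inv_ne_zero h)
  have hsplit : q.Splits := IsAlgClosed.splits q
  have hsum : q.nextCoeff = -q.roots.sum :=
    hsplit.nextCoeff_eq_neg_sum_roots_of_monic hmo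
  have hnext : q.nextCoeff = (a n ω)⁻¹ * a (n-1) ω := by
    rw [Polynomial.nextCoeff, hqdeg]
    have : n ≠ 0 := by omega
    simp only [this, if_false, hq, Polynomial.coeff_C_mul, hcoeff]
    simp [Nat.sub_le]
  have hcard : q.roots.card = n := by
    rw [Polynomial.splits_iff_card_roots.mp hsplit, hqdeg]
  -- bounds via sSup
  have hfin : ((fun z : ℂ => ‖z‖) '' {z : ℂ | z ∈ p.roots}).Finite := by
    apply Set.Finite.image
    have : {z : ℂ | z ∈ p.roots} = ↑p.roots.toFinset := by
      ext z; simp [Multiset.mem_toFinset]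
    rw [this]; exact Finset.finite_toSet _
  have hbdd : BddAbove ((fun z : ℂ => ‖z‖) '' {z : ℂ | z ∈ p.roots}) := hfin.bddAbove
  have hle : ∀ z ∈ p.roots, ‖z‖ ≤ maxRootMod p := fun z hz =>
    le_csSup hbdd ⟨z, hz, rfl⟩
  have hne : ∃ z, z ∈ p.roots := by
    rw [← hroots]
    exact Multiset.card_pos_iff_exists_mem.mp (by omega)
  obtain ⟨z0, hz0⟩ := hne
  have hM0 : 0 ≤ maxRootMod p := le_trans (norm_nonneg z0) (hle z0 hz0)
  have habs : 0 < ‖a n ω‖ := norm_pos_iff.mpr h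
  have hnpos : (0:ℝ) < (n:ℝ) := by exact_mod_cast hn
  have key : ‖a (n-1) ω‖ / ‖a n ω‖ ≤ n * maxRootMod p := by
    have h2 : q.roots.sum = -q.nextCoeff := by rw [hsum, neg_neg]
    have h1 : ‖a (n-1) ω‖ / ‖a n ω‖ = ‖q.roots.sum‖ := by
      rw [h2, norm_neg, hnext]
      simp [map_mul, map_inv₀, div_eq_inv_mul]
    rw [h1]
    calc ‖q.roots.sum‖ ≤ (q.roots.map norm).sum := norm_multiset_sum_le _
      _ ≤ (q.roots.map norm).card • maxRootMod p := by
          apply Multiset.sum_le_card_nsmul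
          intro x hx
          obtain ⟨z, hz, rfl⟩ := Multiset.mem_map.mp hx
          rw [hroots] at hz
          exact hle z hz
      _ = n * maxRootMod p := by
          rw [Multiset.card_map, hcard, nsmul_eq_mul]
  rw [div_le_iff₀ habs] at key
  rw [div_le_iff₀ (mul_pos hnpos habs)]
  calc ‖a (n-1) ω‖ ≤ ↑n * maxRootMod p * ‖a n ω‖ := key
    _ = maxRootMod p * (↑n * ‖a n ω‖) := by ring

lemma lint_inv_Ioi (C T : ℝ) (hC : 0 < C) (hT : 0 < T) :
    ∫⁻ t in Ioi T, ENNReal.ofReal (C * t⁻¹) = ⊤ := by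
  by_contra hfin
  have hfin' : ∫⁻ t in Ioi T, ENNReal.ofReal (C * t⁻¹) < ⊤ := lt_top_iff_ne_top.mpr hfin
  have hmble : Measurable fun t : ℝ => C * t⁻¹ := measurable_const.mul measurable_inv
  have hInt : IntegrableOn (fun t : ℝ => C * t⁻¹) (Ioi T) := by
    refine ⟨hmble.aestronglyMeasurable.restrict, ?_⟩
    rw [hasFiniteIntegral_iff_norm]
    have : ∀ᵐ t ∂(volume.restrict (Ioi T)),
        ENNReal.ofReal ‖C * t⁻¹‖ = ENNReal.ofReal (C * t⁻¹) := by
      filter_upwards [ae_restrict_mem measurableSet_Ioi] with t ht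
      rw [Real.norm_eq_abs, abs_of_nonneg (mul_nonneg hC.le (inv_nonneg.mpr (le_of_lt (lt_trans hT ht))))]
    rwa [lintegral_congr_ae this]
  have hInt2 : IntegrableOn (fun t : ℝ => t ^ (-1 : ℝ)) (Ioi T) := by
    have h1 : IntegrableOn (fun t : ℝ => C⁻¹ * (C * t⁻¹)) (Ioi T) := hInt.const_mul _
    refine (integrableOn_congr_fun (fun t ht => ?_) measurableSet_Ioi).mp h1
    rw [Real.rpow_neg_one]
    field_simp
  have := (integrableOn_Ioi_rpow_iff hT).mp hInt2
  linarith

lemma lint_abs_inv_rpow_top {Ω : Type*} [MeasurableSpace Ω] (μ : Measure Ω)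
    [IsProbabilityMeasure μ]
    (X : Ω → ℂ) (hX : Measurable X) (h0 : μ {ω | X ω = 0} = 0)
    (k c δ : ℝ) (hk : 0 < k) (hc : 0 < c) (hδ : 0 < δ)
    (htail : ∀ t : ℝ, 0 < t → t < δ →
      ENNReal.ofReal (c * t ^ k) ≤ μ {ω | ‖X ω‖ ≤ t}) :
    ∫⁻ ω, ENNReal.ofReal (‖X ω‖ ^ (-k)) ∂μ = ⊤ := by
  set g : Ω → ℝ := fun ω => ‖X ω‖ ^ (-k) with hg
  have hgm : Measurable g := ((continuous_norm.measurable).comp hX).pow_const (-k)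
  have hgnn : ∀ ω, 0 ≤ g ω := fun ω => Real.rpow_nonneg (norm_nonneg _) _
  have layer : ∫⁻ ω, ENNReal.ofReal (g ω) ∂μ = ∫⁻ t in Ioi 0, μ {ω | t < g ω} :=
    lintegral_eq_lintegral_meas_lt μ (Filter.Eventually.of_forall hgnn) hgm.aemeasurable
  set T : ℝ := δ ^ (-k) with hT
  have hTpos : 0 < T := Real.rpow_pos_of_pos hδ _
  have hknz : k ≠ 0 := ne_of_gt hk
  -- pointwise bound on Ioi T
  have key : ∀ t : ℝ, T < t → ENNReal.ofReal ((c / 2 ^ k) * t⁻¹) ≤ μ {ω | t < g ω} := by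
    intro t ht
    have htpos : 0 < t := lt_trans hTpos ht
    set s : ℝ := t ^ (-k⁻¹) / 2 with hs
    have hs2pos : 0 < t ^ (-k⁻¹) := Real.rpow_pos_of_pos htpos _
    have hspos : 0 < s := by positivity
    have hsδ : s < δ := by
      have h1 : t ^ (-k⁻¹) < T ^ (-k⁻¹) :=
        Real.rpow_lt_rpow_of_neg hTpos ht (by simp [hk, inv_pos.mpr hk])
      have h2 : T ^ (-k⁻¹) = δ := by
        rw [hT, ← Real.rpow_mul hδ.le]
        norm_num [hknz]
      calc s < t ^ (-k⁻¹) := by rw [hs]; linarith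
        _ < δ := by rw [← h2]; exact h1
    have hsk : s ^ (-k) = t * 2 ^ k := by
      rw [hs, Real.div_rpow hs2pos.le (by norm_num : (0:ℝ) ≤ 2), ← Real.rpow_mul htpos.le,
        show (-k⁻¹)*(-k) = 1 by field_simp, Real.rpow_one,
        Real.rpow_neg (by norm_num : (0:ℝ) ≤ 2), div_eq_mul_inv, inv_inv]
    have hsub : {ω | ‖X ω‖ ≤ s} ∩ {ω | X ω ≠ 0} ⊆ {ω | t < g ω} := by
      rintro ω ⟨h1, h2⟩
      have habs : 0 < ‖X ω‖ := norm_pos_iff.mpr h2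
      have : s ^ (-k) ≤ g ω := Real.rpow_le_rpow_of_nonpos habs h1 (by linarith)
      have h2k : (1:ℝ) < 2 ^ k := (Real.one_lt_rpow_iff_of_pos (by norm_num)).mpr
        (Or.inl ⟨by norm_num, hk⟩)
      have : t < s ^ (-k) := by rw [hsk]; nlinarith
      exact lt_of_lt_of_le this (by linarith)
    have hmeas_le : μ {ω | ‖X ω‖ ≤ s} ≤ μ {ω | t < g ω} := by
      calc μ {ω | ‖X ω‖ ≤ s}
          ≤ μ (({ω | ‖X ω‖ ≤ s} ∩ {ω | X ω ≠ 0}) ∪ {ω | X ω = 0}) := by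
            apply measure_mono; intro ω hω
            by_cases h : X ω = 0
            · exact Or.inr h
            · exact Or.inl ⟨hω, h⟩
        _ ≤ μ ({ω | ‖X ω‖ ≤ s} ∩ {ω | X ω ≠ 0}) + μ {ω | X ω = 0} :=
            measure_union_le _ _
        _ = μ ({ω | ‖X ω‖ ≤ s} ∩ {ω | X ω ≠ 0}) := by rw [h0, add_zero]
        _ ≤ μ {ω | t < g ω} := measure_mono hsub
    refine le_trans ?_ (le_trans (htail s hspos hsδ) hmeas_le)
    apply ENNReal.ofReal_le_ofReal
    have hsk' : s ^ k = t⁻¹ / 2 ^ k := by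
      rw [hs, Real.div_rpow hs2pos.le (by norm_num : (0:ℝ) ≤ 2), ← Real.rpow_mul htpos.le,
        show (-k⁻¹)*k = -1 by field_simp, Real.rpow_neg_one]
    rw [hsk']
    ring_nf
    exact le_refl _
  have h2kpos : (0:ℝ) < 2 ^ k := Real.rpow_pos_of_pos (by norm_num) _
  have htop : (⊤ : ENNReal) ≤ ∫⁻ t in Ioi (0:ℝ), μ {ω | t < g ω} := by
    rw [← lint_inv_Ioi (c / 2 ^ k) T (div_pos hc h2kpos) hTpos]
    calc ∫⁻ t in Ioi T, ENNReal.ofReal ((c / 2 ^ k) * t⁻¹)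
        ≤ ∫⁻ t in Ioi T, μ {ω | t < g ω} := by
          apply lintegral_mono_ae
          filter_upwards [ae_restrict_mem measurableSet_Ioi] with t ht
          exact key t ht
      _ ≤ ∫⁻ t in Ioi (0:ℝ), μ {ω | t < g ω} := lintegral_mono_set (Ioi_subset_Ioi hTpos.le)
  exact top_le_iff.mp (layer ▸ htop)

end Aux

/-- For i.i.d. complex coefficients with `|a₀|` not a.s. constant and
`ℙ(a₀ = 0) = 0`, if `ℙ(|a₀| ≤ t) ≥ c tᵏ` for all `0 < t < δ` (with `k, c, δ > 0`), then for
every `n ≥ 1` the largest root modulus `xₙ⁽ⁿ⁾` of `P_n` satisfies `𝔼[(xₙ⁽ⁿ⁾)ᵏ] = ∞`. -/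
theorem maxRootMod_rpow_integral_eq_top
    {Ω : Type*} [MeasurableSpace Ω] (μ : Measure Ω) [IsProbabilityMeasure μ]
    (a : ℕ → Ω → ℂ) (hmeas : ∀ k, Measurable (a k))
    (hindep : iIndepFun a μ)
    (hid : ∀ k, IdentDistrib (a k) (a 0) μ μ)
    (hnc : ¬ ∃ c : ℝ, 0 ≤ c ∧ μ {ω | ‖a 0 ω‖ = c} = 1)
    (h0 : μ {ω | a 0 ω = 0} = 0)
    (k c δ : ℝ) (hk : 0 < k) (hc : 0 < c) (hδ : 0 < δ)
    (htail : ∀ t : ℝ, 0 < t → t < δ →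
      ENNReal.ofReal (c * t ^ k) ≤ μ {ω | ‖a 0 ω‖ ≤ t}) :
    ∀ n : ℕ, 1 ≤ n →
      ∫⁻ ω, ENNReal.ofReal (maxRootMod (kacPoly a n ω) ^ k) ∂μ = ⊤ := by
  intro n hn
  have hnull : ∀ m : ℕ, μ {ω | a m ω = 0} = 0 := by
    intro m
    have h1 := (hid m).measure_mem_eq (measurableSet_singleton (0 : ℂ))
    have h2 : (a m) ⁻¹' {0} = {ω | a m ω = 0} := by ext ω; simp
    have h3 : (a 0) ⁻¹' {0} = {ω | a 0 ω = 0} := by ext ω; simp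
    rw [h2, h3] at h1
    rw [h1, h0]
  set F : Ω → ENNReal := fun ω => ENNReal.ofReal (‖a (n-1) ω‖ ^ k) with hF
  set G : Ω → ENNReal := fun ω => ENNReal.ofReal (‖a n ω‖ ^ (-k)) with hG
  have hφ : Measurable fun z : ℂ => ENNReal.ofReal (‖z‖ ^ k) :=
    ((continuous_norm.measurable).pow_const k).ennreal_ofReal
  have hψ : Measurable fun z : ℂ => ENNReal.ofReal (‖z‖ ^ (-k)) :=
    ((continuous_norm.measurable).pow_const (-k)).ennreal_ofReal
  have hFmeas : Measurable F := hφ.comp (hmeas (n-1))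
  have hGmeas : Measurable G := hψ.comp (hmeas n)
  have hnpos : (0:ℝ) < (n:ℝ) := by exact_mod_cast hn
  -- a.e. pointwise bound
  have hae : ∀ᵐ ω ∂μ, ENNReal.ofReal ((n:ℝ) ^ (-k)) * (F ω * G ω)
      ≤ ENNReal.ofReal (maxRootMod (kacPoly a n ω) ^ k) := by
    have h1 : ∀ᵐ ω ∂μ, a n ω ≠ 0 := by
      rw [ae_iff]; simpa using hnull n
    filter_upwards [h1] with ω hω
    set x := ‖a (n-1) ω‖ with hx
    set y := ‖a n ω‖ with hy
    have hy0 : 0 < y := norm_pos_iff.mpr hω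
    have hx0 : 0 ≤ x := norm_nonneg _
    have hr0 : 0 ≤ x / ((n:ℝ) * y) := by positivity
    have hM := abs_div_le_maxRootMod a n hn ω hω
    have hMk : (x / ((n:ℝ) * y)) ^ k ≤ maxRootMod (kacPoly a n ω) ^ k :=
      Real.rpow_le_rpow hr0 hM hk.le
    have hexp : (x / ((n:ℝ) * y)) ^ k = (n:ℝ) ^ (-k) * (x ^ k * y ^ (-k)) := by
      rw [Real.div_rpow hx0 (by positivity), Real.mul_rpow hnpos.le hy0.le,
        Real.rpow_neg hnpos.le, Real.rpow_neg hy0.le]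
      field_simp
    calc ENNReal.ofReal ((n:ℝ) ^ (-k)) * (F ω * G ω)
        = ENNReal.ofReal ((n:ℝ) ^ (-k) * (x ^ k * y ^ (-k))) := by
          rw [ENNReal.ofReal_mul (Real.rpow_nonneg hnpos.le _),
            ENNReal.ofReal_mul (Real.rpow_nonneg hx0 _)]
      _ = ENNReal.ofReal ((x / ((n:ℝ) * y)) ^ k) := by rw [hexp]
      _ ≤ ENNReal.ofReal (maxRootMod (kacPoly a n ω) ^ k) := ENNReal.ofReal_le_ofReal hMk
  -- independence
  have hindFG : IndepFun F G μ := by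
    have h1 : IndepFun (a (n-1)) (a n) μ := hindep.indepFun (by omega)
    exact h1.comp hφ hψ
  have hprod : ∫⁻ ω, F ω * G ω ∂μ = (∫⁻ ω, F ω ∂μ) * ∫⁻ ω, G ω ∂μ := by
    have := lintegral_mul_eq_lintegral_mul_lintegral_of_indepFun hFmeas hGmeas hindFG
    simpa [Pi.mul_apply] using this
  -- G has infinite integral
  have hGtop : ∫⁻ ω, G ω ∂μ = ⊤ := by
    have hident : IdentDistrib G (fun ω => ENNReal.ofReal (‖a 0 ω‖ ^ (-k))) μ μ :=
      (hid n).comp hψ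
    rw [hident.lintegral_eq]
    exact lint_abs_inv_rpow_top μ (a 0) (hmeas 0) h0 k c δ hk hc hδ htail
  -- F has positive integral
  have hFpos : ∫⁻ ω, F ω ∂μ ≠ 0 := by
    have hsupp : {ω | a (n-1) ω ≠ 0} ⊆ Function.support F := by
      intro ω hω
      have : 0 < ‖a (n-1) ω‖ := norm_pos_iff.mpr hω
      simp only [Function.mem_support, hF, ne_eq, ENNReal.ofReal_eq_zero, not_le]
      exact Real.rpow_pos_of_pos this _
    have hone : μ {ω | a (n-1) ω ≠ 0} = 1 := by
      have hms : MeasurableSet {ω | a (n-1) ω = 0} := (hmeas (n-1)) (measurableSet_singleton 0)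
      have : {ω | a (n-1) ω ≠ 0} = {ω | a (n-1) ω = 0}ᶜ := rfl
      rw [this, measure_compl hms (measure_ne_top μ _), hnull (n-1), measure_univ, tsub_zero]
    refine ne_of_gt ((lintegral_pos_iff_support hFmeas).mpr ?_)
    calc (0:ENNReal) < 1 := by norm_num
      _ = μ {ω | a (n-1) ω ≠ 0} := hone.symm
      _ ≤ μ (Function.support F) := measure_mono hsupp
  have hconst : ENNReal.ofReal ((n:ℝ) ^ (-k)) ≠ 0 :=
    (ENNReal.ofReal_pos.mpr (Real.rpow_pos_of_pos hnpos _)).ne'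
  refine top_le_iff.mp ?_
  calc (⊤ : ENNReal)
      = ENNReal.ofReal ((n:ℝ) ^ (-k)) * ((∫⁻ ω, F ω ∂μ) * ∫⁻ ω, G ω ∂μ) := by
        rw [hGtop, ENNReal.mul_top hFpos, ENNReal.mul_top hconst]
    _ = ENNReal.ofReal ((n:ℝ) ^ (-k)) * ∫⁻ ω, F ω * G ω ∂μ := by rw [hprod]
    _ = ∫⁻ ω, ENNReal.ofReal ((n:ℝ) ^ (-k)) * (F ω * G ω) ∂μ :=
        (lintegral_const_mul _ (hFmeas.mul hGmeas)).symm
    _ ≤ ∫⁻ ω, ENNReal.ofReal (maxRootMod (kacPoly a n ω) ^ k) ∂μ := lintegral_mono_ae hae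
end

section
/- Let (a_k)_{k∈ℕ} be i.i.d. complex random variables and let ε > 0. If almost surely sup_{k∈ℕ} |a_k| e^{-εk} < ∞, then 𝔼[log(1 + |a_0|)] < ∞. -/
open MeasureTheory ProbabilityTheory Filter

/-- For i.i.d. complex random variables and `ε > 0`, if almost surely
`sup_k |a_k| e^{-εk} < ∞`, then `𝔼[log(1+|a₀|)] < ∞`. -/
theorem integrable_log_of_ae_bddAbove
    {Ω : Type*} [MeasurableSpace Ω] (μ : Measure Ω) [IsProbabilityMeasure μ]
    (a : ℕ → Ω → ℂ) (hmeas : ∀ k, Measurable (a k))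
    (hindep : iIndepFun a μ)
    (hid : ∀ k, IdentDistrib (a k) (a 0) μ μ)
    (ε : ℝ) (hε : 0 < ε)
    (hbdd : ∀ᵐ ω ∂μ, BddAbove
      (Set.range fun k : ℕ => ‖a k ω‖ * Real.exp (-(ε * k)))) :
    Integrable (fun ω => Real.log (1 + ‖a 0 ω‖)) μ := by
  set X : Ω → ℝ := fun ω => Real.log (1 + ‖a 0 ω‖) with hX
  have habs : Measurable (fun z : ℂ => ‖z‖) := continuous_norm.measurable
  have hlog : Measurable fun z : ℂ => Real.log (1 + ‖z‖) :=
    Real.measurable_log.comp (measurable_const.add habs)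
  have hXmeas : Measurable X := hlog.comp (hmeas 0)
  have hXnonneg : ∀ ω, 0 ≤ X ω := fun ω =>
    Real.log_nonneg (by simpa using (norm_nonneg (a 0 ω)))
  -- the sets
  set B : ℕ → Set ℂ := fun k => {z | 2 * ε * k < Real.log (1 + ‖z‖)} with hB
  have hBmeas : ∀ k, MeasurableSet (B k) := fun k => measurableSet_lt measurable_const hlog
  set s : ℕ → Set Ω := fun k => a k ⁻¹' B k with hs
  set t : ℕ → Set Ω := fun k => a 0 ⁻¹' B k with ht
  have hsmeas : ∀ k, MeasurableSet (s k) := fun k => (hmeas k) (hBmeas k)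
  have htmeas : ∀ k, MeasurableSet (t k) := fun k => (hmeas 0) (hBmeas k)
  have hst : ∀ k, μ (s k) = μ (t k) := fun k => (hid k).measure_mem_eq (hBmeas k)
  by_cases htop : (∑' k, μ (t k)) = ⊤
  · -- second Borel–Cantelli gives a contradiction
    exfalso
    have hsum : (∑' k, μ (s k)) = ⊤ := by simp_rw [hst]; exact htop
    have hsindep : iIndepSet s μ := by
      rw [iIndepSet_iff_meas_biInter hsmeas]
      intro S
      exact hindep.measure_inter_preimage_eq_mul S (fun i _ => hBmeas i)
    have hlimsup : μ (limsup s atTop) = 1 :=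
      ProbabilityTheory.measure_limsup_eq_one hsmeas hsindep hsum
    set E : Set Ω := {ω | BddAbove
      (Set.range fun k : ℕ => ‖a k ω‖ * Real.exp (-(ε * k)))} with hE
    have hEc : μ Eᶜ = 0 := by
      rw [ae_iff] at hbdd
      simpa [hE, Set.compl_setOf] using hbdd
    have hne : (limsup s atTop ∩ E).Nonempty := by
      rw [Set.nonempty_iff_ne_empty]
      intro hempty
      have hsub : limsup s atTop ⊆ Eᶜ := fun ω hω hωE =>
        Set.eq_empty_iff_forall_notMem.1 hempty ω ⟨hω, hωE⟩
      have : μ (limsup s atTop) = 0 := le_antisymm (hEc ▸ measure_mono hsub) (by simp)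
      rw [hlimsup] at this
      exact one_ne_zero this
    obtain ⟨ω, hω1, hω2⟩ := hne
    rw [Filter.mem_limsup_iff_frequently_mem] at hω1
    obtain ⟨C, hC⟩ := hω2
    have hC' : ∀ k : ℕ, ‖a k ω‖ * Real.exp (-(ε * k)) ≤ C := fun k =>
      hC (Set.mem_range_self k)
    have hev : ∀ᶠ k : ℕ in atTop, C + 1 < Real.exp (ε * k) := by
      have h1 : Tendsto (fun k : ℕ => ε * (k : ℝ)) atTop atTop :=
        (tendsto_natCast_atTop_atTop (R := ℝ)).const_mul_atTop hε
      exact (Real.tendsto_exp_atTop.comp h1).eventually_gt_atTop (C + 1)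
    obtain ⟨k, hk1, hk2⟩ := (hω1.and_eventually hev).exists
    -- from `ω ∈ s k` : `exp (2εk) < 1 + |a k ω|`
    have hpos : (0:ℝ) < 1 + ‖a k ω‖ := by
      have := norm_nonneg (a k ω); linarith
    have hk1' : Real.exp (2 * ε * k) < 1 + ‖a k ω‖ := by
      have : 2 * ε * (k:ℝ) < Real.log (1 + ‖a k ω‖) := hk1
      exact (Real.lt_log_iff_exp_lt hpos).1 this
    have hexp2 : Real.exp (2 * ε * k) * Real.exp (-(ε * k)) = Real.exp (ε * k) := by
      rw [← Real.exp_add]; ring_nf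
    have hexpneg : Real.exp (-(ε * k)) ≤ 1 := by
      rw [Real.exp_le_one_iff]
      have : (0:ℝ) ≤ ε * k := by positivity
      linarith
    have hexppos : (0:ℝ) < Real.exp (-(ε * k)) := Real.exp_pos _
    have hlt : C < ‖a k ω‖ * Real.exp (-(ε * k)) := by
      nlinarith [hC' k, Real.exp_pos (ε * (k:ℝ))]
    exact absurd (hC' k) (not_le.2 hlt)
  · -- finite sum : integrability
    have key : ∀ ω, ENNReal.ofReal (X ω) ≤
        ∑' k, Set.indicator (t k) (fun _ => ENNReal.ofReal (2 * ε)) ω := by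
      intro ω
      set y := X ω with hy
      have hy0 : 0 ≤ y := hXnonneg ω
      set m := ⌈y / (2 * ε)⌉₊ with hm
      have hεε : (0:ℝ) < 2 * ε := by linarith
      have hle : y ≤ 2 * ε * m := by
        have := Nat.le_ceil (y / (2 * ε))
        rw [div_le_iff₀ hεε] at this
        linarith
      have hind : ∀ i ∈ Finset.range m,
          Set.indicator (t i) (fun _ => ENNReal.ofReal (2 * ε)) ω = ENNReal.ofReal (2 * ε) := by
        intro i hi
        rw [Finset.mem_range] at hi
        have : (i : ℝ) < y / (2 * ε) := Nat.lt_ceil.1 hi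
        have hmem : ω ∈ t i := by
          show 2 * ε * (i:ℝ) < Real.log (1 + ‖a 0 ω‖)
          rw [lt_div_iff₀ hεε] at this
          calc 2 * ε * (i:ℝ) = i * (2*ε) := by ring
          _ < y := this
          _ = _ := rfl
        simp [Set.indicator_of_mem hmem]
      calc ENNReal.ofReal y ≤ ENNReal.ofReal (2 * ε * m) := ENNReal.ofReal_le_ofReal hle
        _ = m * ENNReal.ofReal (2 * ε) := by
            rw [mul_comm (2*ε) (m:ℝ), ENNReal.ofReal_mul (by positivity)]
            simp
        _ = ∑ i ∈ Finset.range m,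
            Set.indicator (t i) (fun _ => ENNReal.ofReal (2 * ε)) ω := by
            rw [Finset.sum_congr rfl hind]
            simp [mul_comm]
        _ ≤ _ := ENNReal.sum_le_tsum _
    have hlint : (∫⁻ ω, ENNReal.ofReal (X ω) ∂μ) < ⊤ := by
      have h1 : (∫⁻ ω, ENNReal.ofReal (X ω) ∂μ) ≤
          ∫⁻ ω, ∑' k, Set.indicator (t k) (fun _ => ENNReal.ofReal (2 * ε)) ω ∂μ :=
        lintegral_mono key
      have h2 : (∫⁻ ω, ∑' k, Set.indicator (t k) (fun _ => ENNReal.ofReal (2 * ε)) ω ∂μ)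
          = ∑' k, ENNReal.ofReal (2 * ε) * μ (t k) := by
        rw [lintegral_tsum (fun k => (measurable_const.indicator (htmeas k)).aemeasurable)]
        congr 1
        ext k
        rw [lintegral_indicator (htmeas k)]
        simp [mul_comm]
      have h3 : (∑' k, ENNReal.ofReal (2 * ε) * μ (t k)) < ⊤ := by
        rw [ENNReal.tsum_mul_left]
        exact ENNReal.mul_lt_top ENNReal.ofReal_lt_top (lt_top_iff_ne_top.2 htop)
      calc (∫⁻ ω, ENNReal.ofReal (X ω) ∂μ) ≤ _ := h1
        _ = _ := h2
        _ < ⊤ := h3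
    refine ⟨hXmeas.aestronglyMeasurable, ?_⟩
    rw [hasFiniteIntegral_iff_ofReal (Filter.Eventually.of_forall hXnonneg)]
    exact hlint
end

section
/- Let a_0, a_1, a_2, ... be i.i.d. real standard Gaussian random variables. Then for every integer n ≥ 1, the largest root modulus x_n^(n) of the random polynomial P_n(z) = ∑_{k=0}^n a_k z^k (whose complex roots z_1^(n), ..., z_n^(n) are counted with multiplicity) satisfies 𝔼[x_n^(n)] = ∞. -/
open MeasureTheory ProbabilityTheory Polynomial Filter
open scoped ENNReal NNReal

/-! ### Auxiliary lemmas -/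

/-- The integral of `1/x` over `(0,1)` is infinite. -/
lemma aux_lintegral_inv_Ioo_top : ∫⁻ x in Set.Ioo (0:ℝ) 1, ENNReal.ofReal x⁻¹ = ⊤ := by
  by_contra h
  have hm : AEStronglyMeasurable (fun x : ℝ => x⁻¹) (volume.restrict (Set.Ioo 0 1)) :=
    (measurable_id.inv).aestronglyMeasurable
  have hpos : 0 ≤ᵐ[volume.restrict (Set.Ioo (0:ℝ) 1)] fun x => x⁻¹ := by
    filter_upwards [ae_restrict_mem measurableSet_Ioo] with x hx
    exact inv_nonneg.mpr hx.1.le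
  have hint : IntegrableOn (fun x : ℝ => x⁻¹) (Set.Ioo 0 1) :=
    (lintegral_ofReal_ne_top_iff_integrable hm hpos).mp h
  have : IntegrableOn (fun x : ℝ => x ^ (-1 : ℝ)) (Set.Ioo (0:ℝ) 1) := by
    apply hint.congr_fun ?_ measurableSet_Ioo
    intro x hx
    simp [Real.rpow_neg_one]
  rw [intervalIntegral.integrableOn_Ioo_rpow_iff zero_lt_one] at this
  linarith

/-- The reciprocal of the absolute value of a standard Gaussian has infinite mean. -/
lemma aux_lintegral_inv_abs_gaussian_top :
    ∫⁻ x, ENNReal.ofReal |x|⁻¹ ∂(gaussianReal 0 1) = ⊤ := by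
  have hmg : Measurable fun x : ℝ => ENNReal.ofReal |x|⁻¹ :=
    (measurable_abs.inv).ennreal_ofReal
  rw [gaussianReal_of_var_ne_zero 0 one_ne_zero,
    lintegral_withDensity_eq_lintegral_mul _ (measurable_gaussianPDF 0 1) hmg]
  rw [eq_top_iff]
  calc (⊤ : ℝ≥0∞) = ENNReal.ofReal ((Real.sqrt (2 * Real.pi))⁻¹ * Real.exp (-2⁻¹)) *
        ∫⁻ x in Set.Ioo (0:ℝ) 1, ENNReal.ofReal x⁻¹ := by
        rw [aux_lintegral_inv_Ioo_top, ENNReal.mul_top]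
        simp only [ne_eq, ENNReal.ofReal_eq_zero, not_le]
        positivity
    _ = ∫⁻ x in Set.Ioo (0:ℝ) 1,
          ENNReal.ofReal ((Real.sqrt (2 * Real.pi))⁻¹ * Real.exp (-2⁻¹)) * ENNReal.ofReal x⁻¹ := by
        rw [lintegral_const_mul _ (by fun_prop : Measurable fun x : ℝ => ENNReal.ofReal x⁻¹)]
    _ ≤ ∫⁻ x in Set.Ioo (0:ℝ) 1, (gaussianPDF 0 1 * fun x => ENNReal.ofReal |x|⁻¹) x := by
        apply setLIntegral_mono ((measurable_gaussianPDF 0 1).mul hmg)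
        intro x hx
        show _ ≤ gaussianPDF 0 1 x * ENNReal.ofReal |x|⁻¹
        rw [gaussianPDF, ← ENNReal.ofReal_mul (le_of_lt (gaussianPDFReal_pos 0 1 x one_ne_zero)),
          ← ENNReal.ofReal_mul (by positivity)]
        apply ENNReal.ofReal_le_ofReal
        rw [abs_of_pos hx.1]
        apply mul_le_mul_of_nonneg_right _ (inv_nonneg.mpr hx.1.le)
        unfold gaussianPDFReal
        push_cast
        rw [mul_one]
        gcongr
        rw [sub_zero]
        nlinarith [hx.1, hx.2]
    _ ≤ _ := setLIntegral_le_lintegral _ _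

/-- The absolute value of a standard Gaussian has nonzero mean. -/
lemma aux_lintegral_abs_gaussian_ne_zero :
    ∫⁻ x, ENNReal.ofReal |x| ∂(gaussianReal 0 1) ≠ 0 := by
  intro h
  have h0 : (gaussianReal 0 1) {(0:ℝ)} = 0 :=
    gaussianReal_absolutelyContinuous 0 one_ne_zero (Real.volume_singleton)
  rw [lintegral_eq_zero_iff measurable_abs.ennreal_ofReal] at h
  have h1 : (gaussianReal 0 1) {x : ℝ | ¬ ENNReal.ofReal |x| = 0} = 0 := h
  have h2 : {x : ℝ | ¬ ENNReal.ofReal |x| = 0} = {(0:ℝ)}ᶜ := by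
    ext x
    simp [ENNReal.ofReal_eq_zero, abs_nonpos_iff]
  rw [h2] at h1
  have := measure_univ (μ := gaussianReal 0 1)
  rw [← Set.union_compl_self {(0:ℝ)}] at this
  have hle := (measure_union_le (μ := gaussianReal 0 1) {(0:ℝ)} {(0:ℝ)}ᶜ)
  rw [this, h0, h1] at hle
  simp at hle

/-- Bound on the next coefficient via the largest root modulus. -/
lemma aux_nextCoeff_le_bound (p : Polynomial ℂ) (hd : 1 ≤ p.natDegree) :
    ‖p.nextCoeff‖ ≤ p.natDegree * ‖p.leadingCoeff‖ * maxRootMod p := by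
  have hp : p ≠ 0 := fun h => by simp [h] at hd
  have hc : p.leadingCoeff ≠ 0 := leadingCoeff_ne_zero.mpr hp
  set q := p * C p.leadingCoeff⁻¹ with hq
  have hqm : q.Monic := monic_mul_leadingCoeff_inv hp
  have hroots : q.roots = p.roots := by
    rw [hq, mul_comm, roots_C_mul _ (inv_ne_zero hc)]
  have hsplit : q.Splits := IsAlgClosed.splits q
  have hsum := hsplit.nextCoeff_eq_neg_sum_roots_of_monic hqm
  have hqdeg : q.natDegree = p.natDegree := by
    rw [hq, natDegree_mul_C (inv_ne_zero hc)]
  have hqnext : q.nextCoeff = p.nextCoeff * p.leadingCoeff⁻¹ := by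
    rw [nextCoeff_of_natDegree_pos (by omega), nextCoeff_of_natDegree_pos (by omega),
      hqdeg, hq, coeff_mul_C]
  have hfin : ((fun z : ℂ => ‖z‖) '' {z : ℂ | z ∈ p.roots}).Finite :=
    (p.roots.toFinset.finite_toSet.subset (fun z hz => Multiset.mem_toFinset.mpr hz)).image _
  have hbdd : BddAbove ((fun z : ℂ => ‖z‖) '' {z : ℂ | z ∈ p.roots}) := hfin.bddAbove
  have hmem : ∀ z ∈ p.roots, ‖z‖ ≤ maxRootMod p := fun z hz =>
    le_csSup hbdd ⟨z, hz, rfl⟩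
  have hcard : p.roots.card = p.natDegree :=
    splits_iff_card_roots.mp (IsAlgClosed.splits p)
  have h1 : ‖p.roots.sum‖ ≤ (p.roots.map (fun z : ℂ => ‖z‖)).sum := by
    simpa using norm_multiset_sum_le p.roots
  have h2 : (p.roots.map (fun z : ℂ => ‖z‖)).sum ≤ p.roots.card • maxRootMod p := by
    have := Multiset.sum_le_card_nsmul (p.roots.map (fun z : ℂ => ‖z‖)) (maxRootMod p)
      (fun x hx => by obtain ⟨z, hz, rfl⟩ := Multiset.mem_map.mp hx; exact hmem z hz)
    simpa using this
  have h3 : ‖p.nextCoeff‖ = ‖p.leadingCoeff‖ * ‖p.roots.sum‖ := by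
    have : p.nextCoeff = p.leadingCoeff * (-p.roots.sum) := by
      rw [← hroots, ← hsum, hqnext]
      field_simp
    rw [this, norm_mul, norm_neg]
  rw [h3]
  calc ‖p.leadingCoeff‖ * ‖p.roots.sum‖
      ≤ ‖p.leadingCoeff‖ * (p.roots.card • maxRootMod p) :=
        mul_le_mul_of_nonneg_left (h1.trans h2) (norm_nonneg _)
    _ = p.natDegree * ‖p.leadingCoeff‖ * maxRootMod p := by
        rw [hcard, nsmul_eq_mul]; ring

lemma aux_coeff_sum_C_X (b : ℕ → ℂ) (n j : ℕ) :
    (∑ k ∈ Finset.range (n + 1), Polynomial.C (b k) * Polynomial.X ^ k).coeff j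
      = if j < n + 1 then b j else 0 := by
  rw [finset_sum_coeff]
  simp only [coeff_C_mul, coeff_X_pow, mul_ite, mul_one, mul_zero]
  simp only [eq_comm (a := j)]
  rw [Finset.sum_ite_eq' (Finset.range (n+1)) j b]
  simp [Finset.mem_range]

lemma aux_natDegree_sum_C_X (b : ℕ → ℂ) (n : ℕ) (hb : b n ≠ 0) :
    (∑ k ∈ Finset.range (n + 1), Polynomial.C (b k) * Polynomial.X ^ k).natDegree = n := by
  apply le_antisymm
  · apply Polynomial.natDegree_sum_le_of_forall_le
    intro k hk
    apply (Polynomial.natDegree_C_mul_le _ _).trans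
    rw [Polynomial.natDegree_X_pow]
    exact Nat.lt_succ_iff.mp (Finset.mem_range.mp hk)
  · apply Polynomial.le_natDegree_of_ne_zero
    rw [aux_coeff_sum_C_X]
    simpa using hb

/-- For i.i.d. real standard Gaussian coefficients, the largest root
modulus of the Kac polynomial `P_n` (viewed as a complex polynomial) has infinite mean for
every `n ≥ 1`. -/
theorem maxRootMod_infinite_mean_real_gaussian
    {Ω : Type*} [MeasurableSpace Ω] (μ : Measure Ω) [IsProbabilityMeasure μ]
    (a : ℕ → Ω → ℝ) (hmeas : ∀ k, Measurable (a k))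
    (hindep : iIndepFun a μ)
    (hgauss : ∀ k, μ.map (a k) = gaussianReal 0 1) :
    ∀ n : ℕ, 1 ≤ n →
      ∫⁻ ω, ENNReal.ofReal (maxRootMod (kacPoly (fun k ω => (a k ω : ℂ)) n ω)) ∂μ = ⊤ := by
  intro n hn
  set f : ℝ → ℝ≥0∞ := fun x => ENNReal.ofReal |x| with hf
  set g : ℝ → ℝ≥0∞ := fun y => ENNReal.ofReal ((n : ℝ) * |y|)⁻¹ with hg
  have mf : Measurable f := measurable_abs.ennreal_ofReal
  have mg : Measurable g := ((measurable_const.mul measurable_abs).inv).ennreal_ofReal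
  -- a.e. the leading coefficient is nonzero
  have hae : ∀ᵐ ω ∂μ, a n ω ≠ 0 := by
    have h0 : μ {ω | a n ω = 0} = 0 := by
      have : {ω | a n ω = 0} = (a n) ⁻¹' {0} := rfl
      rw [this, ← Measure.map_apply (hmeas n) (measurableSet_singleton 0), hgauss n]
      exact gaussianReal_absolutelyContinuous 0 one_ne_zero Real.volume_singleton
    exact ae_iff.mpr (by simpa using h0)
  -- pointwise lower bound
  have hpt : ∀ᵐ ω ∂μ, f (a (n-1) ω) * g (a n ω) ≤
      ENNReal.ofReal (maxRootMod (kacPoly (fun k ω => (a k ω : ℂ)) n ω)) := by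
    filter_upwards [hae] with ω hω
    set p := kacPoly (fun k ω => (a k ω : ℂ)) n ω with hp
    have hbn : ((a n ω : ℂ)) ≠ 0 := Complex.ofReal_ne_zero.mpr hω
    have hdeg : p.natDegree = n := aux_natDegree_sum_C_X (fun k => (a k ω : ℂ)) n hbn
    have hlead : p.leadingCoeff = (a n ω : ℂ) := by
      rw [Polynomial.leadingCoeff, hdeg, hp, kacPoly, aux_coeff_sum_C_X]
      simp
    have hnext : p.nextCoeff = (a (n-1) ω : ℂ) := by
      rw [nextCoeff_of_natDegree_pos (by omega), hdeg, hp, kacPoly, aux_coeff_sum_C_X]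
      rw [if_pos (by omega)]
    have hbound := aux_nextCoeff_le_bound p (by omega)
    rw [hdeg, hlead, hnext] at hbound
    simp only [Complex.norm_real, Real.norm_eq_abs] at hbound
    have hpos : (0:ℝ) < (n : ℝ) * |a n ω| := by
      have : (0:ℝ) < |a n ω| := abs_pos.mpr hω
      have hn' : (0:ℝ) < (n:ℝ) := by exact_mod_cast hn
      positivity
    have hdiv : |a (n-1) ω| * ((n : ℝ) * |a n ω|)⁻¹ ≤ maxRootMod p := by
      rw [← div_eq_mul_inv, div_le_iff₀ hpos]
      calc |a (n-1) ω| ≤ (n : ℝ) * |a n ω| * maxRootMod p := hbound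
        _ = maxRootMod p * ((n : ℝ) * |a n ω|) := by ring
    calc f (a (n-1) ω) * g (a n ω)
        = ENNReal.ofReal (|a (n-1) ω| * ((n : ℝ) * |a n ω|)⁻¹) := by
          rw [hf, hg, ← ENNReal.ofReal_mul (abs_nonneg _)]
      _ ≤ _ := ENNReal.ofReal_le_ofReal hdiv
  refine top_le_iff.mp ?_
  calc (⊤ : ℝ≥0∞) = ∫⁻ ω, f (a (n-1) ω) * g (a n ω) ∂μ := by
        have hindep2 : IndepFun (f ∘ a (n-1)) (g ∘ a n) μ :=
          (hindep.indepFun (show n - 1 ≠ n by omega)).comp mf mg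
        have := lintegral_mul_eq_lintegral_mul_lintegral_of_indepFun
          (μ := μ) (f := f ∘ a (n-1)) (g := g ∘ a n)
          (mf.comp (hmeas _)) (mg.comp (hmeas _)) hindep2
        have hL : ∫⁻ ω, f (a (n-1) ω) * g (a n ω) ∂μ =
            (∫⁻ ω, f (a (n-1) ω) ∂μ) * ∫⁻ ω, g (a n ω) ∂μ := this
        rw [hL]
        have hfX : ∫⁻ ω, f (a (n-1) ω) ∂μ = ∫⁻ x, f x ∂(gaussianReal 0 1) := by
          rw [← hgauss (n-1), lintegral_map mf (hmeas _)]
        have hgY : ∫⁻ ω, g (a n ω) ∂μ = ∫⁻ y, g y ∂(gaussianReal 0 1) := by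
          rw [← hgauss n, lintegral_map mg (hmeas _)]
        rw [hfX, hgY]
        have hgtop : ∫⁻ y, g y ∂(gaussianReal 0 1) = ⊤ := by
          have hgeq : ∀ y : ℝ, g y = ENNReal.ofReal (n : ℝ)⁻¹ * ENNReal.ofReal |y|⁻¹ := by
            intro y
            show ENNReal.ofReal ((n:ℝ) * |y|)⁻¹ = _
            rw [mul_inv, ENNReal.ofReal_mul (by positivity)]
          simp only [hgeq]
          rw [lintegral_const_mul _ (by fun_prop : Measurable fun y : ℝ => ENNReal.ofReal |y|⁻¹),
            aux_lintegral_inv_abs_gaussian_top, ENNReal.mul_top]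
          simp only [ne_eq, ENNReal.ofReal_eq_zero, not_le]
          have hn' : (0:ℝ) < (n:ℝ) := by exact_mod_cast hn
          positivity
        rw [hgtop, ENNReal.mul_top aux_lintegral_abs_gaussian_ne_zero]
    _ ≤ _ := lintegral_mono_ae hpt
end
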